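/- Let A be a 3×3 real orthogonal matrix with det A = 1, let e : ZMod 8 ≃ ZMod 8 be a bijection, and suppose A.mulVec (xpln (e i)) = xpln i for every i ∈ ZMod 8. If x : ZMod 8 → (Fin 3 → ℝ) satisfies the Eckart condition, then the map y defined by y i = A.mulVec (x (e i)) also satisfies the Eckart condition. (Hence the actions of the symmetry group of the octagon on configurations send standard (Eckart-aligned) realizations to standard realizations.) -/

import Mathlib

open Real Matrix

/-- The planar regular octagon reference configuration:
`xpln i = (cos ((2i-1)π/8), sin ((2i-1)π/8), 0)`, using the integer lift `i.val`;
this is well defined on `ZMod 8` since the expression is unchanged under `i ↦ i + 8`. -/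
noncomputable def xpln (i : ZMod 8) : Fin 3 → ℝ :=
  ![Real.cos ((2 * (i.val : ℝ) - 1) * π / 8), Real.sin ((2 * (i.val : ℝ) - 1) * π / 8), 0]

/-- The Eckart condition with respect to the reference octagon `xpln`. -/
def EckartCondition (x : ZMod 8 → Fin 3 → ℝ) : Prop :=
  (∑ i : ZMod 8, x i = 0) ∧ (∑ i : ZMod 8, (xpln i) ⨯₃ (x i) = 0)

lemma triple_mulVec (A : Matrix (Fin 3) (Fin 3) ℝ) (u v z : Fin 3 → ℝ) :
    (A.mulVec u ⨯₃ A.mulVec v) ⬝ᵥ A.mulVec z = A.det * ((u ⨯₃ v) ⬝ᵥ z) := by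
  simp [crossProduct, dotProduct, mulVec, Matrix.det_fin_three, Fin.sum_univ_three]
  ring

lemma dot_preserved (A : Matrix (Fin 3) (Fin 3) ℝ) (hA : Aᵀ * A = 1)
    (a z : Fin 3 → ℝ) : (A.mulVec a) ⬝ᵥ (A.mulVec z) = a ⬝ᵥ z := by
  rw [Matrix.dotProduct_mulVec, ← Matrix.mulVec_transpose, Matrix.mulVec_mulVec, hA,
    Matrix.one_mulVec]

lemma cross_equivariant (A : Matrix (Fin 3) (Fin 3) ℝ) (hA : Aᵀ * A = 1)
    (hdet : A.det = 1) (u v : Fin 3 → ℝ) :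
    (A.mulVec u) ⨯₃ (A.mulVec v) = A.mulVec (u ⨯₃ v) := by
  have hsurj : ∀ w : Fin 3 → ℝ, ∃ z, A.mulVec z = w := by
    intro w
    refine ⟨Aᵀ.mulVec w, ?_⟩
    rw [Matrix.mulVec_mulVec, mul_eq_one_comm.mp hA, Matrix.one_mulVec]
  funext j
  have h := fun z => triple_mulVec A u v z
  obtain ⟨z, hz⟩ := hsurj (Pi.single j 1)
  have h2 := dot_preserved A hA (u ⨯₃ v) z
  have h3 := h z
  rw [hz] at h3
  rw [hz] at h2
  simp [hdet] at h3 h2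
  rw [h3, ← h2]

theorem eckartCondition_of_symmetry_action
    (A : Matrix (Fin 3) (Fin 3) ℝ) (hA : Aᵀ * A = 1) (hdet : A.det = 1)
    (e : ZMod 8 ≃ ZMod 8)
    (he : ∀ i : ZMod 8, A.mulVec (xpln (e i)) = xpln i)
    (x : ZMod 8 → Fin 3 → ℝ) (hx : EckartCondition x) :
    EckartCondition (fun i => A.mulVec (x (e i))) := by
  obtain ⟨hx1, hx2⟩ := hx
  constructor
  · have : ∑ i : ZMod 8, A.mulVec (x (e i)) = A.mulVec (∑ i : ZMod 8, x (e i)) := by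
      simp only [← Matrix.mulVecLin_apply]
      exact (map_sum A.mulVecLin _ _).symm
    rw [this, Equiv.sum_comp e x, hx1, Matrix.mulVec_zero]
  · have key : ∀ i : ZMod 8, (xpln i) ⨯₃ (A.mulVec (x (e i)))
        = A.mulVec ((xpln (e i)) ⨯₃ (x (e i))) := by
      intro i
      rw [← he i, cross_equivariant A hA hdet]
    simp only [key]
    have : ∑ i : ZMod 8, A.mulVec ((xpln (e i)) ⨯₃ (x (e i)))
        = A.mulVec (∑ i : ZMod 8, (xpln (e i)) ⨯₃ (x (e i))) := by
      simp only [← Matrix.mulVecLin_apply]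
      exact (map_sum A.mulVecLin _ _).symm
    rw [this, Equiv.sum_comp e (fun j => (xpln j) ⨯₃ (x j)), hx2, Matrix.mulVec_zero]
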